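/- Let 𝒵̃(n,K,n₀) = { Z ∈ [0,1]^{n×K} : each row of Z sums to 1, and each column of Z sums to at least n₀ }. Then a matrix Z ∈ 𝒵̃(n,K,n₀) is an extreme point of this convex polytope if and only if all entries of Z belong to {0,1}. -/

import Mathlib

open Finset

/-- The polytope of soft assignment matrices: entries in `[0,1]`, rows summing to one,
columns summing to at least `n₀`. -/
def Ztilde (n K n₀ : ℕ) : Set (Matrix (Fin n) (Fin K) ℝ) :=
  {Z | (∀ i k, Z i k ∈ Set.Icc (0 : ℝ) 1) ∧ (∀ i, ∑ k, Z i k = 1) ∧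
    (∀ k, (n₀ : ℝ) ≤ ∑ i, Z i k)}

lemma sum_zero_one {β : Type*} (s : Finset β) (x : β → ℝ)
    (h : ∀ j ∈ s, x j = 0 ∨ x j = 1) : ∃ m : ℕ, ∑ j ∈ s, x j = m := by
  classical
  induction s using Finset.cons_induction with
  | empty => exact ⟨0, by simp⟩
  | cons a s ha ih =>
    obtain ⟨m, hm⟩ := ih (fun j hj => h j (Finset.mem_cons_of_mem hj))
    rcases h a (Finset.mem_cons_self a s) with h0 | h1
    · exact ⟨m, by rw [Finset.sum_cons, h0, hm]; ring⟩
    · exact ⟨m + 1, by rw [Finset.sum_cons, h1, hm]; push_cast; ring⟩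

lemma not_frac_cast {x : ℝ} (hx0 : 0 < x) (hx1 : x < 1) (a m : ℕ) (h : x + m = a) :
    False := by
  have hma : (m : ℝ) < a := by linarith
  have : m < a := by exact_mod_cast hma
  have : (m : ℝ) + 1 ≤ a := by exact_mod_cast this
  linarith

lemma exists_ker {α β : Type*} [Fintype α] [Fintype β] [DecidableEq α] [DecidableEq β]
    (F : Finset (α × β)) (Rs : Finset α) (Cs : Finset β)
    (hcard : Rs.card + Cs.card < F.card) :
    ∃ D : α → β → ℝ,
      (∃ p ∈ F, D p.1 p.2 ≠ 0) ∧
      (∀ i k, (i, k) ∉ F → D i k = 0) ∧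
      (∀ i ∈ Rs, ∑ k, D i k = 0) ∧
      (∀ k ∈ Cs, ∑ i, D i k = 0) := by
  classical
  set ext : (↥F → ℝ) → α → β → ℝ :=
    fun W i k => if h : (i, k) ∈ F then W ⟨(i, k), h⟩ else 0 with hext
  have ext_add : ∀ W W' i k, ext (W + W') i k = ext W i k + ext W' i k := by
    intro W W' i k
    simp only [hext]
    split <;> simp
  have ext_smul : ∀ (c : ℝ) W i k, ext (c • W) i k = c * ext W i k := by
    intro c W i k
    simp only [hext]
    split <;> simp
  let Φ : (↥F → ℝ) →ₗ[ℝ] (↥Rs → ℝ) × (↥Cs → ℝ) :=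
    { toFun := fun W => (fun i => ∑ k, ext W i.1 k, fun k => ∑ i, ext W i k.1)
      map_add' := by
        intro W W'
        refine Prod.ext ?_ ?_ <;> funext j <;>
          simp [ext_add, Finset.sum_add_distrib]
      map_smul' := by
        intro c W
        refine Prod.ext ?_ ?_ <;> funext j <;>
          simp [ext_smul, Finset.mul_sum] }
  have hninj : ¬ Function.Injective Φ := by
    intro hinj
    have := LinearMap.finrank_le_finrank_of_injective hinj
    rw [Module.finrank_prod, Module.finrank_pi, Module.finrank_pi, Module.finrank_pi,
      Fintype.card_coe, Fintype.card_coe, Fintype.card_coe] at this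
    omega
  rw [← LinearMap.ker_eq_bot] at hninj
  obtain ⟨W, hWker, hW0⟩ := Submodule.ne_bot_iff _ |>.mp hninj
  have hΦW : Φ W = 0 := hWker
  refine ⟨ext W, ?_, ?_, ?_, ?_⟩
  · obtain ⟨p, hp⟩ := Function.ne_iff.mp hW0
    exact ⟨p.1, p.2, by simpa [hext, p.2] using hp⟩
  · intro i k hik
    simp [hext, hik]
  · intro i hi
    have := congrFun (congrArg Prod.fst hΦW) ⟨i, hi⟩
    exact this
  · intro k hk
    have := congrFun (congrArg Prod.snd hΦW) ⟨k, hk⟩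
    exact this

lemma exists_direction (n K n₀ : ℕ) (Z : Matrix (Fin n) (Fin K) ℝ)
    (hZ : Z ∈ Ztilde n K n₀) (i₀ : Fin n) (k₀ : Fin K)
    (hfrac : Z i₀ k₀ ≠ 0 ∧ Z i₀ k₀ ≠ 1) :
    ∃ D : Matrix (Fin n) (Fin K) ℝ,
      (∃ i k, D i k ≠ 0) ∧
      (∀ i k, (Z i k = 0 ∨ Z i k = 1) → D i k = 0) ∧
      (∀ i, ∑ k, D i k = 0) ∧
      (∀ k, (∑ i, D i k) ≠ 0 → (n₀ : ℝ) < ∑ i, Z i k) := by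
  classical
  obtain ⟨hbox, hrow, hcol⟩ := hZ
  set F : Finset (Fin n × Fin K) :=
    univ.filter (fun p => Z p.1 p.2 ≠ 0 ∧ Z p.1 p.2 ≠ 1) with hF
  have hmemF : ∀ i k, (i, k) ∈ F ↔ (Z i k ≠ 0 ∧ Z i k ≠ 1) := by
    intro i k; simp [hF]
  have hpos : ∀ i k, (i, k) ∈ F → 0 < Z i k ∧ Z i k < 1 := by
    intro i k hik
    obtain ⟨h0, h1⟩ := (hmemF i k).mp hik
    exact ⟨lt_of_le_of_ne (hbox i k).1 (Ne.symm h0), lt_of_le_of_ne (hbox i k).2 h1⟩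
  -- each row containing a fractional entry contains at least two
  have hrowfiber : ∀ i k, (i, k) ∈ F → 2 ≤ (F.filter (fun p => p.1 = i)).card := by
    intro i k hik
    by_contra hlt
    push_neg at hlt
    have hmem : (i, k) ∈ F.filter (fun p => p.1 = i) := mem_filter.mpr ⟨hik, rfl⟩
    have huniq : ∀ k', k' ≠ k → (i, k') ∉ F := by
      intro k' hk' hmem'
      have hmem'' : (i, k') ∈ F.filter (fun p => p.1 = i) := mem_filter.mpr ⟨hmem', rfl⟩
      have heq : ((i, k') : Fin n × Fin K) = (i, k) :=
        Finset.card_le_one.mp (by omega) _ hmem'' _ hmem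
      exact hk' (by simpa using congrArg Prod.snd heq)
    obtain ⟨m, hm⟩ := sum_zero_one (univ.erase k) (Z i) (fun k' hk' => by
      by_contra hc
      push_neg at hc
      exact huniq k' (Finset.ne_of_mem_erase hk') ((hmemF i k').mpr hc))
    have h1 : Z i k + ∑ k' ∈ univ.erase k, Z i k' = 1 := by
      rw [Finset.add_sum_erase _ (Z i) (mem_univ k)]; exact hrow i
    rw [hm] at h1
    exact not_frac_cast (hpos i k hik).1 (hpos i k hik).2 1 m (by push_cast; linarith)
  -- each tight column containing a fractional entry contains at least two
  have hcolfiber : ∀ k, (∃ i, (i, k) ∈ F) → (∑ i, Z i k = (n₀ : ℝ)) →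
      2 ≤ (F.filter (fun p => p.2 = k)).card := by
    rintro k ⟨i, hik⟩ htight
    by_contra hlt
    push_neg at hlt
    have hmem : (i, k) ∈ F.filter (fun p => p.2 = k) := mem_filter.mpr ⟨hik, rfl⟩
    have huniq : ∀ i', i' ≠ i → (i', k) ∉ F := by
      intro i' hi' hmem'
      have hmem'' : (i', k) ∈ F.filter (fun p => p.2 = k) := mem_filter.mpr ⟨hmem', rfl⟩
      have heq : ((i', k) : Fin n × Fin K) = (i, k) :=
        Finset.card_le_one.mp (by omega) _ hmem'' _ hmem
      exact hi' (by simpa using congrArg Prod.fst heq)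
    obtain ⟨m, hm⟩ := sum_zero_one (univ.erase i) (fun i' => Z i' k) (fun i' hi' => by
      by_contra hc
      push_neg at hc
      exact huniq i' (Finset.ne_of_mem_erase hi') ((hmemF i' k).mpr hc))
    have h1 : Z i k + ∑ i' ∈ univ.erase i, Z i' k = (n₀ : ℝ) := by
      rw [Finset.add_sum_erase _ (fun i' => Z i' k) (mem_univ i)]; exact htight
    rw [hm] at h1
    exact not_frac_cast (hpos i k hik).1 (hpos i k hik).2 n₀ m h1
  set Rs : Finset (Fin n) := univ.filter (fun i => ∃ k, (i, k) ∈ F) with hRs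
  set T : Finset (Fin K) :=
    univ.filter (fun k => (∃ i, (i, k) ∈ F) ∧ ∑ i, Z i k = (n₀ : ℝ)) with hT
  -- counting: rows
  have hcardR : 2 * Rs.card ≤ F.card := by
    have h1 : F.card = ∑ i, (F.filter (fun p => p.1 = i)).card :=
      Finset.card_eq_sum_card_fiberwise (fun p _ => mem_univ p.1)
    have h2 : ∑ i ∈ Rs, (F.filter (fun p => p.1 = i)).card
        ≤ ∑ i, (F.filter (fun p => p.1 = i)).card :=
      Finset.sum_le_sum_of_subset (Finset.subset_univ Rs)
    have h3 : ∑ i ∈ Rs, 2 ≤ ∑ i ∈ Rs, (F.filter (fun p => p.1 = i)).card :=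
      Finset.sum_le_sum (fun i hi => by
        obtain ⟨k, hk⟩ := (mem_filter.mp hi).2
        exact hrowfiber i k hk)
    have h4 : ∑ _i ∈ Rs, 2 = 2 * Rs.card := by
      rw [Finset.sum_const, smul_eq_mul, mul_comm]
    omega
  have hsumC : F.card = ∑ k, (F.filter (fun p => p.2 = k)).card :=
    Finset.card_eq_sum_card_fiberwise (fun p _ => mem_univ p.2)
  have hfibT : ∑ k ∈ T, 2 ≤ ∑ k ∈ T, (F.filter (fun p => p.2 = k)).card :=
    Finset.sum_le_sum (fun k hk => by
      obtain ⟨hex, htight⟩ := (mem_filter.mp hk).2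
      exact hcolfiber k hex htight)
  have hconstT : ∑ _k ∈ T, 2 = 2 * T.card := by
    rw [Finset.sum_const, smul_eq_mul, mul_comm]
  -- pick column constraint set, case split on existence of a slack fractional column
  obtain ⟨Cs, hcard, hCsspec⟩ : ∃ Cs : Finset (Fin K),
      (Rs.card + Cs.card < F.card) ∧
      (Cs = T ∨ (Cs = T.erase k₀ ∧ ∀ k, (∃ i, (i, k) ∈ F) → ∑ i, Z i k = (n₀ : ℝ))) := by
    by_cases hsl : ∃ k, (∃ i, (i, k) ∈ F) ∧ (n₀ : ℝ) < ∑ i, Z i k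
    · obtain ⟨kS, hkSex, hkSlt⟩ := hsl
      have hkS_notT : kS ∉ T := by
        intro hmem
        exact absurd (mem_filter.mp hmem).2.2 (by linarith)
      have hfibS : 1 ≤ (F.filter (fun p => p.2 = kS)).card := by
        obtain ⟨iS, hiS⟩ := hkSex
        exact Finset.card_pos.mpr ⟨(iS, kS), mem_filter.mpr ⟨hiS, rfl⟩⟩
      have hins : ∑ k ∈ insert kS T, (F.filter (fun p => p.2 = k)).card
          ≤ ∑ k, (F.filter (fun p => p.2 = k)).card :=
        Finset.sum_le_sum_of_subset (Finset.subset_univ _)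
      rw [Finset.sum_insert hkS_notT] at hins
      refine ⟨T, by omega, Or.inl rfl⟩
    · push_neg at hsl
      have halltight : ∀ k, (∃ i, (i, k) ∈ F) → ∑ i, Z i k = (n₀ : ℝ) := fun k hk =>
        le_antisymm (hsl k hk) (hcol k)
      have hk₀F : (i₀, k₀) ∈ F := (hmemF i₀ k₀).mpr hfrac
      have hk₀T : k₀ ∈ T :=
        mem_filter.mpr ⟨mem_univ k₀, ⟨i₀, hk₀F⟩, halltight k₀ ⟨i₀, hk₀F⟩⟩
      have hTpos : 1 ≤ T.card := Finset.card_pos.mpr ⟨k₀, hk₀T⟩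
      have herase : (T.erase k₀).card = T.card - 1 := Finset.card_erase_of_mem hk₀T
      have hTle : ∑ k ∈ T, (F.filter (fun p => p.2 = k)).card
          ≤ ∑ k, (F.filter (fun p => p.2 = k)).card :=
        Finset.sum_le_sum_of_subset (Finset.subset_univ _)
      refine ⟨T.erase k₀, by omega, Or.inr ⟨rfl, halltight⟩⟩
  -- get the direction from the kernel
  obtain ⟨D, hDne, hDoff, hDrowker, hDcolker⟩ := exists_ker F Rs Cs hcard
  have hrows : ∀ i, ∑ k, D i k = 0 := by
    intro i
    by_cases hi : i ∈ Rs
    · exact hDrowker i hi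
    · exact Finset.sum_eq_zero fun k _ =>
        hDoff i k fun hmem => hi (mem_filter.mpr ⟨mem_univ i, ⟨k, hmem⟩⟩)
  refine ⟨D, ?_, ?_, hrows, ?_⟩
  · obtain ⟨p, _, hp⟩ := hDne
    exact ⟨p.1, p.2, hp⟩
  · intro i k h01
    apply hDoff
    rw [hmemF]
    tauto
  · intro k hSk
    have hex : ∃ i, (i, k) ∈ F := by
      by_contra hne
      push_neg at hne
      exact hSk (Finset.sum_eq_zero fun i _ => hDoff i k (hne i))
    rcases hCsspec with rfl | ⟨rfl, halltight⟩
    · by_contra hnlt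
      have htight : ∑ i, Z i k = (n₀ : ℝ) := le_antisymm (not_lt.mp hnlt) (hcol k)
      exact hSk (hDcolker k (mem_filter.mpr ⟨mem_univ k, hex, htight⟩))
    · exfalso
      have hallS : ∀ k', k' ≠ k₀ → ∑ i, D i k' = 0 := by
        intro k' hk'
        by_cases hex' : ∃ i, (i, k') ∈ F
        · exact hDcolker k' (Finset.mem_erase.mpr
            ⟨hk', mem_filter.mpr ⟨mem_univ k', hex', halltight k' hex'⟩⟩)
        · push_neg at hex'
          exact Finset.sum_eq_zero fun i _ => hDoff i k' (hex' i)
      have htot : ∑ k', ∑ i, D i k' = 0 := by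
        rw [Finset.sum_comm]
        exact Finset.sum_eq_zero fun i _ => hrows i
      have herase0 : ∑ k' ∈ univ.erase k₀, ∑ i, D i k' = 0 :=
        Finset.sum_eq_zero fun k' hk' => hallS k' (Finset.ne_of_mem_erase hk')
      have hsplit := Finset.add_sum_erase univ (fun k' => ∑ i, D i k') (mem_univ k₀)
      have hS0 : ∑ i, D i k₀ = 0 := by
        rw [herase0] at hsplit
        simpa [htot] using hsplit
      by_cases hkk : k = k₀
      · exact hSk (hkk ▸ hS0)
      · exact hSk (hallS k hkk)

theorem stmt_16 (n K n₀ : ℕ) (hn : 0 < n) (hK : 0 < K) (hn₀ : 0 < n₀) (h : K * n₀ ≤ n)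
    (Z : Matrix (Fin n) (Fin K) ℝ) (hZ : Z ∈ Ztilde n K n₀) :
    Z ∈ Set.extremePoints ℝ (Ztilde n K n₀) ↔ ∀ i k, Z i k = 0 ∨ Z i k = 1 := by
  classical
  constructor
  · intro hext
    by_contra hc
    push_neg at hc
    obtain ⟨i₀, k₀, hfrac⟩ := hc
    obtain ⟨D, ⟨i₁, k₁, hD1⟩, hDsupp, hDrow, hDcol⟩ :=
      exists_direction n K n₀ Z hZ i₀ k₀ hfrac
    obtain ⟨hbox, hrow, hcol⟩ := hZ
    set S : Fin K → ℝ := fun k => ∑ i, D i k with hS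
    set m' : Fin n × Fin K → ℝ := fun p =>
      if D p.1 p.2 = 0 then 1 else min (Z p.1 p.2) (1 - Z p.1 p.2) / (|D p.1 p.2| + 1) with hm'
    set bc : Fin K → ℝ := fun k =>
      if S k = 0 then 1 else (∑ i, Z i k - n₀) / (|S k| + 1) with hbc
    have hne1 : (Finset.univ : Finset (Fin n × Fin K)).Nonempty := ⟨(i₁, k₁), Finset.mem_univ _⟩
    have hne2 : (Finset.univ : Finset (Fin K)).Nonempty := ⟨k₁, Finset.mem_univ _⟩
    set ε : ℝ := min (Finset.univ.inf' hne1 m') (Finset.univ.inf' hne2 bc) with hε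
    have hfracpos : ∀ i k, D i k ≠ 0 → 0 < Z i k ∧ Z i k < 1 := by
      intro i k hD
      have h01 : ¬(Z i k = 0 ∨ Z i k = 1) := fun hh => hD (hDsupp i k hh)
      push_neg at h01
      exact ⟨lt_of_le_of_ne (hbox i k).1 (Ne.symm h01.1), lt_of_le_of_ne (hbox i k).2 h01.2⟩
    have hm'pos : ∀ p, 0 < m' p := by
      intro p
      simp only [hm']
      split
      · norm_num
      · next hD =>
        have hp := hfracpos p.1 p.2 hD
        have h1 : 0 < min (Z p.1 p.2) (1 - Z p.1 p.2) := lt_min hp.1 (by linarith [hp.2])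
        exact div_pos h1 (by positivity)
    have hbcpos : ∀ k, 0 < bc k := by
      intro k
      simp only [hbc]
      split
      · norm_num
      · next hSk =>
        have hlt := hDcol k hSk
        exact div_pos (by linarith) (by positivity)
    have hεpos : 0 < ε := by
      apply lt_min
      · exact (Finset.lt_inf'_iff hne1).mpr (fun p _ => hm'pos p)
      · exact (Finset.lt_inf'_iff hne2).mpr (fun k _ => hbcpos k)
    have hentry : ∀ i k, D i k ≠ 0 → ε * |D i k| ≤ min (Z i k) (1 - Z i k) := by
      intro i k hD
      have h1 : ε ≤ m' (i, k) :=
        le_trans (min_le_left _ _) (Finset.inf'_le _ (Finset.mem_univ (i, k)))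
      rw [hm'] at h1
      simp only [if_neg hD] at h1
      have h2 : ε * (|D i k| + 1) ≤ min (Z i k) (1 - Z i k) :=
        (le_div_iff₀ (by positivity)).mp h1
      nlinarith [abs_nonneg (D i k), hεpos]
    have hcolbound : ∀ k, S k ≠ 0 → ε * |S k| + n₀ ≤ ∑ i, Z i k := by
      intro k hSk
      have h1 : ε ≤ bc k :=
        le_trans (min_le_right _ _) (Finset.inf'_le _ (Finset.mem_univ k))
      rw [hbc] at h1
      simp only [if_neg hSk] at h1
      have h2 : ε * (|S k| + 1) ≤ ∑ i, Z i k - n₀ :=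
        (le_div_iff₀ (by positivity)).mp h1
      nlinarith [abs_nonneg (S k), hεpos]
    have hmem : ∀ t : ℝ, |t| ≤ ε → (Z + t • D) ∈ Ztilde n K n₀ := by
      intro t ht
      refine ⟨?_, ?_, ?_⟩
      · intro i k
        have happ : (Z + t • D) i k = Z i k + t * D i k := by
          simp [Matrix.add_apply, Matrix.smul_apply, smul_eq_mul]
        rw [happ]
        by_cases hD : D i k = 0
        · rw [hD]
          simpa using hbox i k
        · have hb := hentry i k hD
          have habs : |t * D i k| ≤ min (Z i k) (1 - Z i k) := by
            rw [abs_mul]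
            calc |t| * |D i k| ≤ ε * |D i k| :=
                  mul_le_mul_of_nonneg_right ht (abs_nonneg _)
              _ ≤ _ := hb
          have h1 := abs_le.mp habs
          have h2 : min (Z i k) (1 - Z i k) ≤ Z i k := min_le_left _ _
          have h3 : min (Z i k) (1 - Z i k) ≤ 1 - Z i k := min_le_right _ _
          exact Set.mem_Icc.mpr ⟨by linarith [h1.1], by linarith [h1.2]⟩
      · intro i
        have : ∑ k, (Z i k + t * D i k) = 1 := by
          rw [Finset.sum_add_distrib, hrow i, ← Finset.mul_sum, hDrow i]
          ring
        simpa [Matrix.add_apply, Matrix.smul_apply, smul_eq_mul] using this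
      · intro k
        have hsum : ∑ i, (Z + t • D) i k = ∑ i, Z i k + t * S k := by
          simp only [Matrix.add_apply, Matrix.smul_apply, smul_eq_mul, hS]
          rw [Finset.sum_add_distrib, ← Finset.mul_sum]
        rw [hsum]
        by_cases hSk : S k = 0
        · rw [hSk]
          simpa using hcol k
        · have hb := hcolbound k hSk
          have habs : |t * S k| ≤ ε * |S k| := by
            rw [abs_mul]
            exact mul_le_mul_of_nonneg_right ht (abs_nonneg _)
          have h1 := abs_le.mp habs
          linarith [h1.1]
    rw [mem_extremePoints] at hext
    have hmem1 : Z + (-ε) • D ∈ Ztilde n K n₀ := hmem (-ε) (by rw [abs_neg, abs_of_pos hεpos])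
    have hmem2 : Z + ε • D ∈ Ztilde n K n₀ := hmem ε (by rw [abs_of_pos hεpos])
    have hseg : Z ∈ openSegment ℝ (Z + (-ε) • D) (Z + ε • D) := by
      refine ⟨1/2, 1/2, by norm_num, by norm_num, by norm_num, ?_⟩
      ext i k
      simp [Matrix.add_apply, Matrix.smul_apply, smul_eq_mul]
      ring
    have heq := (hext.2 _ hmem1 _ hmem2 hseg).2
    have heq' := congrFun (congrFun heq i₁) k₁
    simp only [Matrix.add_apply, Matrix.smul_apply, smul_eq_mul] at heq'
    have : ε * D i₁ k₁ = 0 := by linarith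
    rcases mul_eq_zero.mp this with h' | h'
    · exact hεpos.ne' h'
    · exact hD1 h'
  · intro h01
    rw [mem_extremePoints]
    refine ⟨hZ, ?_⟩
    intro x₁ hx₁ x₂ hx₂ hseg
    obtain ⟨a, b, ha, hb, hab, hsum⟩ := hseg
    have key : ∀ i k, x₁ i k = Z i k ∧ x₂ i k = Z i k := by
      intro i k
      have he := congrFun (congrFun hsum i) k
      simp only [Matrix.add_apply, Matrix.smul_apply, smul_eq_mul] at he
      have h1l := (hx₁.1 i k).1
      have h1r := (hx₁.1 i k).2
      have h2l := (hx₂.1 i k).1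
      have h2r := (hx₂.1 i k).2
      rcases h01 i k with h0 | h1
      · rw [h0] at he ⊢
        have e1 : a * x₁ i k = a * 0 := by
          nlinarith [mul_nonneg ha.le h1l, mul_nonneg hb.le h2l]
        have e2 : b * x₂ i k = b * 0 := by
          nlinarith [mul_nonneg ha.le h1l, mul_nonneg hb.le h2l]
        exact ⟨mul_left_cancel₀ ha.ne' e1, mul_left_cancel₀ hb.ne' e2⟩
      · rw [h1] at he ⊢
        have e1 : a * x₁ i k = a * 1 := by
          nlinarith [mul_nonneg ha.le (sub_nonneg.mpr h1r), mul_nonneg hb.le (sub_nonneg.mpr h2r)]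
        have e2 : b * x₂ i k = b * 1 := by
          nlinarith [mul_nonneg ha.le (sub_nonneg.mpr h1r), mul_nonneg hb.le (sub_nonneg.mpr h2r)]
        exact ⟨mul_left_cancel₀ ha.ne' e1, mul_left_cancel₀ hb.ne' e2⟩
    constructor
    · ext i k
      exact (key i k).1
    · ext i k
      exact (key i k).2
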